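/- Suppose μ is supported on the unit ball of H, (e_k)_{k=1}^K is the canonical orthonormal basis of ℝ^K, c ≥ 1, and 𝒯 is the class of all bounded linear maps T : ℝ^K → H with ‖T e_k‖ ≤ c for 1 ≤ k ≤ K. Let Y = {e_1, …, e_K} and F_Y = { x ↦ min_{1 ≤ k ≤ K} ‖x − T e_k‖² : T ∈ 𝒯 }. Then R_m(F_Y, μ) ≤ c² K √(18π/m). -/

import Mathlib

open MeasureTheory

noncomputable def rademacher {X : Type*} [MeasurableSpace X] (m : ℕ)
    (F : Set (X → ℝ)) (μ : Measure X) : ℝ :=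
  (2 / m) * ∫ x : Fin m → X,
    (∑ ε : Fin m → Bool,
        sSup ((fun f : X → ℝ => ∑ i, (if ε i then (1 : ℝ) else -1) * f (x i)) '' F)) / 2 ^ m
    ∂(Measure.pi fun _ => μ)

namespace Stmt8Aux

open Finset

def sg (b : Bool) : ℝ := if b then 1 else -1

lemma abs_sg_le (b : Bool) : |sg b| ≤ 1 := by cases b <;> simp [sg]

lemma sg_not (b : Bool) : sg (!b) = - sg b := by cases b <;> simp [sg]

lemma sg_true : sg true = 1 := rfl
lemma sg_false : sg false = -1 := rfl

set_option linter.unusedSectionVars false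

variable {T : Type*} [Nonempty T] {m : ℕ}

/-- uniformly bounded in each coordinate -/
def Bdd (g : T → Fin m → ℝ) : Prop := ∀ i, ∃ C, ∀ t, |g t i| ≤ C

noncomputable def RE (g : T → Fin m → ℝ) : ℝ :=
  ∑ ε : Fin m → Bool, ⨆ t, ∑ i, sg (ε i) * g t i

lemma Bdd.neg {g : T → Fin m → ℝ} (hg : Bdd g) : Bdd (fun t i => -(g t i)) := by
  intro i; obtain ⟨C, hC⟩ := hg i; exact ⟨C, fun t => by simpa using hC t⟩

lemma Bdd.add {g k : T → Fin m → ℝ} (hg : Bdd g) (hk : Bdd k) :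
    Bdd (fun t i => g t i + k t i) := by
  intro i; obtain ⟨C, hC⟩ := hg i; obtain ⟨D, hD⟩ := hk i
  exact ⟨C + D, fun t => (abs_add_le _ _).trans (add_le_add (hC t) (hD t))⟩

lemma Bdd.sub {g k : T → Fin m → ℝ} (hg : Bdd g) (hk : Bdd k) :
    Bdd (fun t i => g t i - k t i) := by
  simpa [sub_eq_add_neg] using hg.add hk.neg

lemma Bdd.half {g : T → Fin m → ℝ} (hg : Bdd g) : Bdd (fun t i => g t i / 2) := by
  intro i; obtain ⟨C, hC⟩ := hg i
  exact ⟨C / 2, fun t => by rw [abs_div]; simp only [abs_two]; linarith [hC t]⟩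

lemma Bdd.comp {g : T → Fin m → ℝ} (hg : Bdd g) (φ : Fin m → ℝ → ℝ)
    (hφ : ∀ i, LipschitzWith 1 (φ i)) : Bdd (fun t i => φ i (g t i)) := by
  intro i; obtain ⟨C, hC⟩ := hg i
  refine ⟨|φ i 0| + C, fun t => ?_⟩
  have h1 : |φ i (g t i) - φ i 0| ≤ |g t i| := by
    have := (hφ i).dist_le_mul (g t i) 0
    simpa [Real.dist_eq] using this
  calc |φ i (g t i)| ≤ |φ i 0| + |φ i (g t i) - φ i 0| := by
        have := abs_add_le (φ i 0) (φ i (g t i) - φ i 0); simpa using this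
    _ ≤ |φ i 0| + C := by linarith [hC t]

lemma lipschitzAbs : LipschitzWith 1 (fun x : ℝ => |x|) := by
  exact lipschitzWith_one_norm (E := ℝ)

lemma Bdd.abs {g : T → Fin m → ℝ} (hg : Bdd g) : Bdd (fun t i => |g t i|) :=
  hg.comp (fun _ => fun x => |x|) (fun _ => lipschitzAbs)

lemma Bdd.ite {g : T → Fin m → ℝ} (hg : Bdd g) (φ : Fin m → ℝ → ℝ)
    (hφ : ∀ i, LipschitzWith 1 (φ i)) (S : Finset (Fin m)) :
    Bdd (fun t i => if i ∈ S then φ i (g t i) else g t i) := by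
  intro i
  by_cases h : i ∈ S
  · obtain ⟨C, hC⟩ := hg.comp φ hφ i; exact ⟨C, fun t => by simp only [h, if_true]; exact hC t⟩
  · obtain ⟨C, hC⟩ := hg i; exact ⟨C, fun t => by simp only [h, if_false]; exact hC t⟩

lemma bddAbove_signed {g : T → Fin m → ℝ} (hg : Bdd g) (s : Fin m → Bool) :
    BddAbove (Set.range fun t => ∑ i, sg (s i) * g t i) := by
  choose C hC using hg
  refine ⟨∑ i, C i, ?_⟩
  rintro _ ⟨t, rfl⟩
  refine Finset.sum_le_sum fun i _ => ?_
  calc sg (s i) * g t i ≤ |sg (s i) * g t i| := le_abs_self _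
    _ = |sg (s i)| * |g t i| := abs_mul _ _
    _ ≤ 1 * C i := mul_le_mul (abs_sg_le _) (hC i t) (abs_nonneg _) zero_le_one
    _ = C i := one_mul _


lemma pair_sum (F : (Fin m → Bool) → ℝ) (a : Fin m) :
    ∑ ε : Fin m → Bool, F ε
      = ∑ ε ∈ Finset.univ.filter (fun ε : Fin m → Bool => ε a = true),
          (F ε + F (Function.update ε a false)) := by
  rw [Finset.sum_add_distrib]
  rw [← Finset.sum_filter_add_sum_filter_not Finset.univ
      (fun ε : Fin m → Bool => ε a = true) F]
  congr 1
  refine Finset.sum_nbij' (i := fun ε => Function.update ε a true)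
    (j := fun ε => Function.update ε a false) ?_ ?_ ?_ ?_ ?_
  · intro ε hε
    simp only [Finset.mem_filter, Finset.mem_univ, true_and] at hε ⊢
    simp
  · intro ε hε
    simp only [Finset.mem_filter, Finset.mem_univ, true_and] at hε ⊢
    simp
  · intro ε hε
    simp only [Finset.mem_filter, Finset.mem_univ, true_and, Bool.not_eq_true] at hε
    show Function.update (Function.update ε a true) a false = ε
    rw [Function.update_idem, show false = ε a from hε.symm, Function.update_eq_self]
  · intro ε hε
    simp only [Finset.mem_filter, Finset.mem_univ, true_and] at hε
    show Function.update (Function.update ε a false) a true = ε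
    rw [Function.update_idem, show true = ε a from hε.symm, Function.update_eq_self]
  · intro ε hε
    simp only [Finset.mem_filter, Finset.mem_univ, true_and, Bool.not_eq_true] at hε
    rw [Function.update_idem, show false = ε a from hε.symm, Function.update_eq_self]

lemma two_point {A B R : T → ℝ}
    (hAB : ∀ t s, A t - A s ≤ |B t - B s|)
    (hA : ∃ C, ∀ t, |A t| ≤ C) (hB : ∃ C, ∀ t, |B t| ≤ C) (hR : ∃ C, ∀ t, |R t| ≤ C) :
    (⨆ t, (A t + R t)) + (⨆ t, (-A t + R t))
      ≤ (⨆ t, (B t + R t)) + (⨆ t, (-B t + R t)) := by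
  obtain ⟨CA, hCA⟩ := hA; obtain ⟨CB, hCB⟩ := hB; obtain ⟨CR, hCR⟩ := hR
  have bdd : ∀ (u : T → ℝ) (Cu : ℝ), (∀ t, |u t| ≤ Cu) →
      BddAbove (Set.range fun t => u t + R t) := by
    intro u Cu hCu
    refine ⟨Cu + CR, ?_⟩
    rintro _ ⟨t, rfl⟩
    have h1 := abs_le.mp (hCu t); have h2 := abs_le.mp (hCR t)
    exact add_le_add h1.2 h2.2
  have hBR : BddAbove (Set.range fun t => B t + R t) := bdd B CB hCB
  have hBR' : BddAbove (Set.range fun t => -B t + R t) :=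
    bdd (fun t => -B t) CB (fun t => by simpa using hCB t)
  set RHS := (⨆ t, (B t + R t)) + (⨆ t, (-B t + R t)) with hRHS
  have key : ∀ t s, (A t + R t) + (-A s + R s) ≤ RHS := by
    intro t s
    rcases abs_cases (B t - B s) with ⟨he, _⟩ | ⟨he, _⟩
    · have h1 := hAB t s
      rw [he] at h1
      have h2 : (A t + R t) + (-A s + R s) ≤ (B t + R t) + (-B s + R s) := by linarith
      exact h2.trans (add_le_add (le_ciSup hBR t) (le_ciSup hBR' s))
    · have h1 := hAB t s
      rw [he] at h1
      have h2 : (A t + R t) + (-A s + R s) ≤ (B s + R s) + (-B t + R t) := by linarith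
      exact h2.trans (add_le_add (le_ciSup hBR s) (le_ciSup hBR' t))
  have step1 : (⨆ t, (A t + R t)) ≤ RHS - ⨆ s, (-A s + R s) := by
    refine ciSup_le fun t => ?_
    have h3 : (⨆ s, (-A s + R s)) ≤ RHS - (A t + R t) :=
      ciSup_le fun s => by linarith [key t s]
    linarith
  linarith [step1]


lemma RE_comp_le (g : T → Fin m → ℝ) (φ : Fin m → ℝ → ℝ)
    (hφ : ∀ i, LipschitzWith 1 (φ i)) (hg : Bdd g) :
    RE (fun t i => φ i (g t i)) ≤ RE g := by
  have main : ∀ S : Finset (Fin m),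
      (∑ ε : Fin m → Bool, ⨆ t, ∑ i, sg (ε i) * (if i ∈ S then φ i (g t i) else g t i))
        ≤ RE g := by
    intro S
    induction S using Finset.induction with
    | empty => exact le_of_eq (by simp [RE])
    | @insert a S ha ih =>
      refine le_trans ?_ ih
      rw [pair_sum (fun ε => ⨆ t, ∑ i, sg (ε i) *
            (if i ∈ insert a S then φ i (g t i) else g t i)) a,
          pair_sum (fun ε => ⨆ t, ∑ i, sg (ε i) *
            (if i ∈ S then φ i (g t i) else g t i)) a]
      refine Finset.sum_le_sum fun ε hε => ?_
      have hεa : ε a = true := by simpa using (Finset.mem_filter.mp hε).2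
      have hsplit : ∀ (σ : Fin m → Bool) (v : T → Fin m → ℝ),
          (⨆ t, ∑ i, sg (σ i) * v t i)
            = ⨆ t, (sg (σ a) * v t a
                + ∑ i ∈ Finset.univ.erase a, sg (σ i) * v t i) :=
        fun σ v => iSup_congr fun t => (Finset.add_sum_erase _ _ (Finset.mem_univ a)).symm
      have erase_congr : ∀ (σ : Fin m → Bool) (t : T),
          (∑ i ∈ Finset.univ.erase a, sg (Function.update σ a false i) *
              (if i ∈ insert a S then φ i (g t i) else g t i))
            = ∑ i ∈ Finset.univ.erase a, sg (σ i) * (if i ∈ S then φ i (g t i) else g t i) := by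
        intro σ t
        refine Finset.sum_congr rfl fun i hi => ?_
        have hia : i ≠ a := Finset.ne_of_mem_erase hi
        rw [Function.update_of_ne hia]
        simp [Finset.mem_insert, hia]
      have erase_congr2 : ∀ (σ : Fin m → Bool) (t : T),
          (∑ i ∈ Finset.univ.erase a, sg (σ i) *
              (if i ∈ insert a S then φ i (g t i) else g t i))
            = ∑ i ∈ Finset.univ.erase a, sg (σ i) * (if i ∈ S then φ i (g t i) else g t i) := by
        intro σ t
        refine Finset.sum_congr rfl fun i hi => ?_
        have hia : i ≠ a := Finset.ne_of_mem_erase hi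
        simp [Finset.mem_insert, hia]
      have erase_congr3 : ∀ (σ : Fin m → Bool) (t : T),
          (∑ i ∈ Finset.univ.erase a, sg (Function.update σ a false i) *
              (if i ∈ S then φ i (g t i) else g t i))
            = ∑ i ∈ Finset.univ.erase a, sg (σ i) * (if i ∈ S then φ i (g t i) else g t i) := by
        intro σ t
        refine Finset.sum_congr rfl fun i hi => ?_
        rw [Function.update_of_ne (Finset.ne_of_mem_erase hi)]
      have e1 : (⨆ t, ∑ i, sg (ε i) * (if i ∈ insert a S then φ i (g t i) else g t i))
          = ⨆ t, (φ a (g t a)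
              + ∑ i ∈ Finset.univ.erase a, sg (ε i) * (if i ∈ S then φ i (g t i) else g t i)) := by
        rw [hsplit]
        refine iSup_congr fun t => ?_
        rw [erase_congr2 ε t, hεa]
        simp [sg]
      have e2 : (⨆ t, ∑ i, sg (Function.update ε a false i) *
            (if i ∈ insert a S then φ i (g t i) else g t i))
          = ⨆ t, (-(φ a (g t a))
              + ∑ i ∈ Finset.univ.erase a, sg (ε i) * (if i ∈ S then φ i (g t i) else g t i)) := by
        rw [hsplit]
        refine iSup_congr fun t => ?_
        rw [erase_congr ε t, Function.update_self]
        simp [sg]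
      have e3 : (⨆ t, ∑ i, sg (ε i) * (if i ∈ S then φ i (g t i) else g t i))
          = ⨆ t, (g t a
              + ∑ i ∈ Finset.univ.erase a, sg (ε i) * (if i ∈ S then φ i (g t i) else g t i)) := by
        rw [hsplit]
        refine iSup_congr fun t => ?_
        rw [hεa]
        simp [sg, ha]
      have e4 : (⨆ t, ∑ i, sg (Function.update ε a false i) *
            (if i ∈ S then φ i (g t i) else g t i))
          = ⨆ t, (-(g t a)
              + ∑ i ∈ Finset.univ.erase a, sg (ε i) * (if i ∈ S then φ i (g t i) else g t i)) := by
        rw [hsplit]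
        refine iSup_congr fun t => ?_
        rw [erase_congr3 ε t, Function.update_self]
        simp [sg, ha]
      rw [e1, e2, e3, e4]
      have hmix := hg.ite φ hφ S
      choose C hC using hmix
      refine two_point ?_ ?_ ?_ ?_
      · intro t s
        refine le_trans (le_abs_self _) ?_
        simpa [Real.dist_eq] using (hφ a).dist_le_mul (g t a) (g s a)
      · obtain ⟨CA, hCA⟩ := (hg.comp φ hφ) a
        exact ⟨CA, hCA⟩
      · exact hg a
      · refine ⟨∑ i ∈ Finset.univ.erase a, C i, fun t => ?_⟩
        refine le_trans (Finset.abs_sum_le_sum_abs _ _) (Finset.sum_le_sum fun i _ => ?_)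
        calc |sg (ε i) * (if i ∈ S then φ i (g t i) else g t i)|
            = |sg (ε i)| * |if i ∈ S then φ i (g t i) else g t i| := abs_mul _ _
          _ ≤ 1 * C i := mul_le_mul (abs_sg_le _) (hC i t) (abs_nonneg _) zero_le_one
          _ = C i := one_mul _
  have := main Finset.univ
  simpa [RE] using this


lemma RE_neg (g : T → Fin m → ℝ) : RE (fun t i => -(g t i)) = RE g := by
  unfold RE
  refine Fintype.sum_bijective (fun ε : Fin m → Bool => fun i => !(ε i))
    (Function.Involutive.bijective fun ε => by funext i; simp) _ _ fun ε => ?_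
  refine iSup_congr fun t => Finset.sum_congr rfl fun i _ => ?_
  rw [sg_not]; ring

lemma RE_add_le {g k : T → Fin m → ℝ} (hg : Bdd g) (hk : Bdd k) :
    RE (fun t i => g t i + k t i) ≤ RE g + RE k := by
  unfold RE
  rw [← Finset.sum_add_distrib]
  refine Finset.sum_le_sum fun ε _ => ?_
  refine ciSup_le fun t => ?_
  have hsum : ∑ i, sg (ε i) * (g t i + k t i)
      = (∑ i, sg (ε i) * g t i) + ∑ i, sg (ε i) * k t i := by
    rw [← Finset.sum_add_distrib]; exact Finset.sum_congr rfl fun i _ => by ring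
  rw [hsum]
  exact add_le_add (le_ciSup (bddAbove_signed hg ε) t) (le_ciSup (bddAbove_signed hk ε) t)

lemma ciSup_half (f : T → ℝ) (hf : BddAbove (Set.range f)) :
    (⨆ t, f t / 2) = (⨆ t, f t) / 2 := by
  have hf2 : BddAbove (Set.range fun t => f t / 2) := by
    obtain ⟨C, hC⟩ := hf
    refine ⟨C / 2, ?_⟩
    rintro _ ⟨t, rfl⟩
    have : f t ≤ C := hC ⟨t, rfl⟩
    linarith
  refine le_antisymm (ciSup_le fun t => by
    have := le_ciSup hf t; linarith) ?_
  rw [div_le_iff₀ (by norm_num : (0:ℝ) < 2)]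
  refine ciSup_le fun t => ?_
  have := le_ciSup hf2 t
  linarith

lemma RE_half (g : T → Fin m → ℝ) (hg : Bdd g) :
    RE (fun t i => g t i / 2) = RE g / 2 := by
  unfold RE
  rw [Finset.sum_div]
  refine Finset.sum_congr rfl fun ε _ => ?_
  have hsum : ∀ t, ∑ i, sg (ε i) * (g t i / 2) = (∑ i, sg (ε i) * g t i) / 2 := fun t => by
    rw [Finset.sum_div]; exact Finset.sum_congr rfl fun i _ => by ring
  simp_rw [hsum]
  exact ciSup_half _ (bddAbove_signed hg ε)

lemma RE_min_le {u v : T → Fin m → ℝ} (hu : Bdd u) (hv : Bdd v) :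
    RE (fun t i => min (u t i) (v t i)) ≤ RE u + RE v := by
  have hid : (fun t i => min (u t i) (v t i))
      = fun t i => (u t i + v t i) / 2 + -(|u t i - v t i| / 2) := by
    funext t i
    rcases le_total (u t i) (v t i) with h | h
    · rw [min_eq_left h, abs_of_nonpos (by linarith)]; ring
    · rw [min_eq_right h, abs_of_nonneg (by linarith)]; ring
  rw [hid]
  have b1 : Bdd (fun t i => (u t i + v t i) / 2) := (hu.add hv).half
  have b2 : Bdd (fun t i => |u t i - v t i| / 2) := (hu.sub hv).abs.half
  have h1 : RE (fun t i => (u t i + v t i) / 2 + -(|u t i - v t i| / 2))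
      ≤ RE (fun t i => (u t i + v t i) / 2) + RE (fun t i => -(|u t i - v t i| / 2)) :=
    RE_add_le b1 b2.neg
  rw [RE_neg (fun t i => |u t i - v t i| / 2)] at h1
  rw [RE_half _ (hu.add hv), RE_half _ (hu.sub hv).abs] at h1
  have h2 : RE (fun t i => u t i + v t i) ≤ RE u + RE v := RE_add_le hu hv
  have h3 : RE (fun t i => |u t i - v t i|) ≤ RE u + RE v := by
    have habs : RE (fun t i => |u t i - v t i|) ≤ RE (fun t i => u t i - v t i) :=
      RE_comp_le (fun t i => u t i - v t i) (fun _ => fun x => |x|)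
        (fun _ => lipschitzAbs) (hu.sub hv)
    have hsub : RE (fun t i => u t i - v t i) ≤ RE u + RE v := by
      have := RE_add_le hu hv.neg
      rw [RE_neg v] at this
      simpa [sub_eq_add_neg] using this
    linarith
  linarith

lemma Bdd_inf' {κ : Type*} (h : κ → T → Fin m → ℝ) (hb : ∀ k, Bdd (h k))
    (s : Finset κ) (hs : s.Nonempty) :
    Bdd (fun t i => s.inf' hs fun k => h k t i) := by
  intro i
  choose C hC using fun k => hb k i
  obtain ⟨k₀, hk₀⟩ := hs
  refine ⟨s.sup' ⟨k₀, hk₀⟩ C, fun t => ?_⟩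
  rw [abs_le]
  constructor
  · refine Finset.le_inf' _ _ fun k hk => ?_
    have h1 := (abs_le.mp (hC k t)).1
    have h2 : C k ≤ s.sup' ⟨k₀, hk₀⟩ C := Finset.le_sup' _ hk
    linarith
  · refine le_trans (Finset.inf'_le _ hk₀) ?_
    have h1 := (abs_le.mp (hC k₀ t)).2
    have h2 : C k₀ ≤ s.sup' ⟨k₀, hk₀⟩ C := Finset.le_sup' _ hk₀
    linarith

lemma RE_inf'_le {κ : Type*} (h : κ → T → Fin m → ℝ) (hb : ∀ k, Bdd (h k))
    (s : Finset κ) (hs : s.Nonempty) :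
    RE (fun t i => s.inf' hs fun k => h k t i) ≤ ∑ k ∈ s, RE (h k) := by
  induction hs using Finset.Nonempty.cons_induction with
  | singleton k => simp
  | cons k s hks hs ih =>
    have hmin : (fun t i => (Finset.cons k s hks).inf' (Finset.cons_nonempty hks)
          fun k' => h k' t i)
        = fun t i => min (h k t i) (s.inf' hs fun k' => h k' t i) := by
      funext t i
      rw [Finset.inf'_cons]
    rw [hmin, Finset.sum_cons]
    have := RE_min_le (hb k) (Bdd_inf' h hb s hs)
    linarith


lemma sum_sg_zero (i : Fin m) : ∑ ε : Fin m → Bool, sg (ε i) = 0 := by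
  have hbij : Function.Bijective (fun ε : Fin m → Bool => Function.update ε i (!(ε i))) := by
    refine Function.Involutive.bijective fun ε => ?_
    funext j
    rcases eq_or_ne j i with rfl | hj
    · simp
    · simp [Function.update_of_ne hj]
  have h1 : ∑ ε : Fin m → Bool, sg (ε i) = ∑ ε : Fin m → Bool, sg (!(ε i)) := by
    refine Fintype.sum_bijective _ hbij _ _ fun ε => ?_
    simp
  have h2 : ∑ ε : Fin m → Bool, sg (!(ε i)) = -∑ ε : Fin m → Bool, sg (ε i) := by
    rw [← Finset.sum_neg_distrib]
    exact Finset.sum_congr rfl fun ε _ => sg_not _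
  linarith [h1, h2.symm ▸ h1]

lemma sum_sg_mul (i j : Fin m) (hij : i ≠ j) :
    ∑ ε : Fin m → Bool, sg (ε i) * sg (ε j) = 0 := by
  have hbij : Function.Bijective (fun ε : Fin m → Bool => Function.update ε i (!(ε i))) := by
    refine Function.Involutive.bijective fun ε => ?_
    funext l
    rcases eq_or_ne l i with rfl | hl
    · simp
    · simp [Function.update_of_ne hl]
  have h1 : ∑ ε : Fin m → Bool, sg (ε i) * sg (ε j)
      = ∑ ε : Fin m → Bool, sg (!(ε i)) * sg (ε j) := by
    refine Fintype.sum_bijective _ hbij _ _ fun ε => ?_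
    simp [Function.update_of_ne hij.symm]
  have h2 : ∑ ε : Fin m → Bool, sg (!(ε i)) * sg (ε j)
      = -∑ ε : Fin m → Bool, sg (ε i) * sg (ε j) := by
    rw [← Finset.sum_neg_distrib]
    refine Finset.sum_congr rfl fun ε _ => by rw [sg_not]; ring
  linarith [h1, h2]

lemma sum_sg_mul_eq (i j : Fin m) :
    ∑ ε : Fin m → Bool, sg (ε i) * sg (ε j)
      = if i = j then (2 : ℝ) ^ m else 0 := by
  rcases eq_or_ne i j with rfl | hij
  · rw [if_pos rfl]
    have : ∀ ε : Fin m → Bool, sg (ε i) * sg (ε i) = 1 := fun ε => by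
      cases (ε i) <;> norm_num [sg]
    rw [Finset.sum_congr rfl fun ε _ => this ε, Finset.sum_const]
    simp [Finset.card_univ]
  · rw [if_neg hij]
    exact sum_sg_mul i j hij


lemma sum_norm_sum_sq {F : Type*} [NormedAddCommGroup F] [InnerProductSpace ℝ F]
    (x : Fin m → F) :
    ∑ ε : Fin m → Bool, ‖∑ i, sg (ε i) • x i‖ ^ 2 = 2 ^ m * ∑ i, ‖x i‖ ^ 2 := by
  have expand : ∀ ε : Fin m → Bool, ‖∑ i, sg (ε i) • x i‖ ^ 2
      = ∑ i, ∑ j, (sg (ε i) * sg (ε j)) * inner ℝ (x i) (x j) := by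
    intro ε
    rw [← real_inner_self_eq_norm_sq, sum_inner]
    refine Finset.sum_congr rfl fun i _ => ?_
    rw [real_inner_smul_left, inner_sum]
    rw [Finset.mul_sum]
    refine Finset.sum_congr rfl fun j _ => ?_
    rw [real_inner_smul_right]
    ring
  simp_rw [expand]
  rw [Finset.sum_comm]
  have : ∀ i : Fin m, ∑ ε : Fin m → Bool, ∑ j, (sg (ε i) * sg (ε j)) * inner ℝ (x i) (x j)
      = 2 ^ m * ‖x i‖ ^ 2 := by
    intro i
    rw [Finset.sum_comm]
    have h1 : ∀ j : Fin m, ∑ ε : Fin m → Bool, (sg (ε i) * sg (ε j)) * inner ℝ (x i) (x j)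
        = (if i = j then (2:ℝ) ^ m else 0) * inner ℝ (x i) (x j) := by
      intro j
      rw [← Finset.sum_mul, sum_sg_mul_eq]
    simp_rw [h1]
    simp_rw [ite_mul, zero_mul]
    rw [Finset.sum_ite_eq Finset.univ i (fun j => ((2:ℝ)^m) * inner ℝ (x i) (x j))]
    simp [real_inner_self_eq_norm_sq]
  simp_rw [this]
  rw [← Finset.mul_sum]

lemma cs_bound (v : (Fin m → Bool) → ℝ) (hv : ∀ ε, 0 ≤ v ε)
    (h : ∑ ε : Fin m → Bool, (v ε) ^ 2 ≤ 2 ^ m * m) :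
    ∑ ε : Fin m → Bool, v ε ≤ 2 ^ m * Real.sqrt m := by
  have h1 : (∑ ε : Fin m → Bool, v ε) ^ 2 ≤ 2 ^ m * (2 ^ m * m) := by
    have hcs := Finset.sum_mul_sq_le_sq_mul_sq Finset.univ (fun _ => (1:ℝ)) v
    simp only [one_mul, one_pow] at hcs
    rw [Finset.sum_const, Finset.card_univ] at hcs
    have hcard : (Fintype.card (Fin m → Bool) • (1:ℝ)) = 2 ^ m := by
      simp [Fintype.card_fun]
    rw [hcard] at hcs
    calc (∑ ε : Fin m → Bool, v ε) ^ 2 ≤ 2 ^ m * ∑ ε : Fin m → Bool, (v ε)^2 := hcs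
      _ ≤ 2 ^ m * (2 ^ m * m) := by
          have : (0:ℝ) ≤ 2 ^ m := by positivity
          nlinarith
  have h2 : ∑ ε : Fin m → Bool, v ε ≤ Real.sqrt (2 ^ m * (2 ^ m * m)) :=
    Real.le_sqrt_of_sq_le h1
  refine h2.trans (le_of_eq ?_)
  rw [show (2:ℝ) ^ m * (2 ^ m * m) = ((2:ℝ)^m)^2 * m by ring]
  rw [Real.sqrt_mul (by positivity), Real.sqrt_sq (by positivity)]


lemma sum_norm_signed_le {F : Type*} [NormedAddCommGroup F] [InnerProductSpace ℝ F]
    (x : Fin m → F) (hx : ∀ i, ‖x i‖ ≤ 1) :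
    ∑ ε : Fin m → Bool, ‖∑ i, sg (ε i) • x i‖ ≤ 2 ^ m * Real.sqrt m := by
  refine cs_bound _ (fun ε => norm_nonneg _) ?_
  rw [sum_norm_sum_sq]
  have h1 : ∑ i : Fin m, ‖x i‖ ^ 2 ≤ (m : ℝ) := by
    calc ∑ i : Fin m, ‖x i‖ ^ 2 ≤ ∑ _i : Fin m, (1:ℝ) :=
          Finset.sum_le_sum fun i _ => pow_le_one₀ (norm_nonneg _) (hx i)
      _ = m := by simp
  have h2 : (0:ℝ) ≤ 2 ^ m := by positivity
  nlinarith

lemma sum_abs_signed_le :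
    ∑ ε : Fin m → Bool, |∑ i, sg (ε i)| ≤ 2 ^ m * Real.sqrt m := by
  have := sum_norm_signed_le (fun _ : Fin m => (1:ℝ)) (fun i => by norm_num)
  simpa [smul_eq_mul, Real.norm_eq_abs] using this

lemma percluster {F : Type*} [NormedAddCommGroup F] [InnerProductSpace ℝ F]
    {c : ℝ} (hc : 1 ≤ c) (x : Fin m → F) (hx : ∀ i, ‖x i‖ ≤ 1)
    (u : T → F) (hu : ∀ t, ‖u t‖ ≤ c) :
    RE (fun t i => ‖x i - u t‖ ^ 2) ≤ 2 ^ m * ((2 * c + c ^ 2) * Real.sqrt m) := by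
  have hc0 : (0:ℝ) ≤ c := by linarith
  have hA : ∀ ε : Fin m → Bool, (⨆ t, ∑ i, sg (ε i) * ‖x i - u t‖ ^ 2)
      ≤ (∑ i, sg (ε i) * ‖x i‖ ^ 2)
        + (2 * c * ‖∑ i, sg (ε i) • x i‖ + c ^ 2 * |∑ i, sg (ε i)|) := by
    intro ε
    refine ciSup_le fun t => ?_
    have expand : ∑ i, sg (ε i) * ‖x i - u t‖ ^ 2
        = (∑ i, sg (ε i) * ‖x i‖ ^ 2)
          - 2 * inner ℝ (∑ i, sg (ε i) • x i) (u t)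
          + (∑ i, sg (ε i)) * ‖u t‖ ^ 2 := by
      rw [sum_inner]
      simp_rw [real_inner_smul_left]
      rw [Finset.mul_sum, Finset.sum_mul]
      rw [← Finset.sum_sub_distrib, ← Finset.sum_add_distrib]
      refine Finset.sum_congr rfl fun i _ => ?_
      rw [norm_sub_sq_real]
      ring
    rw [expand]
    have hinner : -(2 * inner ℝ (∑ i, sg (ε i) • x i) (u t))
        ≤ 2 * c * ‖∑ i, sg (ε i) • x i‖ := by
      have h1 := abs_real_inner_le_norm (∑ i, sg (ε i) • x i) (u t)
      have h2 : ‖∑ i, sg (ε i) • x i‖ * ‖u t‖ ≤ ‖∑ i, sg (ε i) • x i‖ * c :=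
        mul_le_mul_of_nonneg_left (hu t) (norm_nonneg _)
      have h3 := neg_abs_le (inner ℝ (∑ i, sg (ε i) • x i) (u t) : ℝ)
      nlinarith
    have hsq : (∑ i, sg (ε i)) * ‖u t‖ ^ 2 ≤ c ^ 2 * |∑ i, sg (ε i)| := by
      have h1 : ‖u t‖ ^ 2 ≤ c ^ 2 := pow_le_pow_left₀ (norm_nonneg _) (hu t) 2
      have h2 := le_abs_self (∑ i, sg (ε i))
      have h3 := abs_nonneg (∑ i, sg (ε i))
      nlinarith [sq_nonneg (‖u t‖)]
    linarith
  have hRE : RE (fun t i => ‖x i - u t‖ ^ 2)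
      ≤ ∑ ε : Fin m → Bool, ((∑ i, sg (ε i) * ‖x i‖ ^ 2)
        + (2 * c * ‖∑ i, sg (ε i) • x i‖ + c ^ 2 * |∑ i, sg (ε i)|)) :=
    Finset.sum_le_sum fun ε _ => hA ε
  have hzero : ∑ ε : Fin m → Bool, ∑ i, sg (ε i) * ‖x i‖ ^ 2 = 0 := by
    rw [Finset.sum_comm]
    have : ∀ i : Fin m, ∑ ε : Fin m → Bool, sg (ε i) * ‖x i‖ ^ 2 = 0 := fun i => by
      rw [← Finset.sum_mul, sum_sg_zero, zero_mul]
    simp_rw [this]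
    simp
  rw [Finset.sum_add_distrib, hzero, Finset.sum_add_distrib, ← Finset.mul_sum,
    ← Finset.mul_sum] at hRE
  have hn := sum_norm_signed_le x hx
  have ha := sum_abs_signed_le (m := m)
  have hs0 : (0:ℝ) ≤ Real.sqrt m := Real.sqrt_nonneg _
  have h2m : (0:ℝ) ≤ 2 ^ m := by positivity
  calc RE (fun t i => ‖x i - u t‖ ^ 2)
      ≤ 0 + (2 * c * ∑ ε : Fin m → Bool, ‖∑ i, sg (ε i) • x i‖
          + c ^ 2 * ∑ ε : Fin m → Bool, |∑ i, sg (ε i)|) := hRE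
    _ ≤ 0 + (2 * c * (2 ^ m * Real.sqrt m) + c ^ 2 * (2 ^ m * Real.sqrt m)) := by
        have := mul_le_mul_of_nonneg_left hn (by linarith : (0:ℝ) ≤ 2 * c)
        have := mul_le_mul_of_nonneg_left ha (by positivity : (0:ℝ) ≤ c ^ 2)
        linarith
    _ = 2 ^ m * ((2 * c + c ^ 2) * Real.sqrt m) := by ring

lemma master {F : Type*} [NormedAddCommGroup F] [InnerProductSpace ℝ F]
    {K : ℕ} (hK : 1 ≤ K) {c : ℝ} (hc : 1 ≤ c)
    (p : T → Fin K → F) (hp : ∀ t k, ‖p t k‖ ≤ c)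
    (x : Fin m → F) (hx : ∀ i, ‖x i‖ ≤ 1) :
    RE (fun t i => sInf (Set.range fun k => ‖x i - p t k‖ ^ 2))
      ≤ 2 ^ m * ((K : ℝ) * ((2 * c + c ^ 2) * Real.sqrt m)) := by
  haveI : Nonempty (Fin K) := Fin.pos_iff_nonempty.mp hK
  have hinf : ∀ (f : Fin K → ℝ), sInf (Set.range f)
      = Finset.univ.inf' Finset.univ_nonempty f := fun f => by
    rw [Finset.inf'_eq_csInf_image, Finset.coe_univ, Set.image_univ]
  have hrw : (fun (t : T) (i : Fin m) => sInf (Set.range fun k => ‖x i - p t k‖ ^ 2))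
      = fun t i => Finset.univ.inf' Finset.univ_nonempty (fun k => ‖x i - p t k‖ ^ 2) := by
    funext t i
    exact hinf _
  rw [hrw]
  have hbdd : ∀ k : Fin K, Bdd (fun (t : T) (i : Fin m) => ‖x i - p t k‖ ^ 2) := by
    intro k i
    refine ⟨(1 + c) ^ 2, fun t => ?_⟩
    rw [abs_of_nonneg (by positivity)]
    have h1 : ‖x i - p t k‖ ≤ 1 + c :=
      (norm_sub_le _ _).trans (add_le_add (hx i) (hp t k))
    exact pow_le_pow_left₀ (norm_nonneg _) h1 2
  refine le_trans (RE_inf'_le _ hbdd Finset.univ Finset.univ_nonempty) ?_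
  have hper : ∀ k : Fin K, RE (fun (t : T) (i : Fin m) => ‖x i - p t k‖ ^ 2)
      ≤ 2 ^ m * ((2 * c + c ^ 2) * Real.sqrt m) := fun k =>
    percluster hc x hx (fun t => p t k) (fun t => hp t k)
  calc ∑ k : Fin K, RE (fun (t : T) (i : Fin m) => ‖x i - p t k‖ ^ 2)
      ≤ ∑ _k : Fin K, 2 ^ m * ((2 * c + c ^ 2) * Real.sqrt m) :=
        Finset.sum_le_sum fun k _ => hper k
    _ = 2 ^ m * ((K : ℝ) * ((2 * c + c ^ 2) * Real.sqrt m)) := by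
        rw [Finset.sum_const, Finset.card_univ]
        simp [nsmul_eq_mul]
        ring

end Stmt8Aux

open Stmt8Aux

theorem stmt8 {H : Type*} [NormedAddCommGroup H] [InnerProductSpace ℝ H]
    [MeasurableSpace H] [BorelSpace H]
    {K m : ℕ} (hK : 1 ≤ K) (hm : 1 ≤ m)
    (μ : Measure H) [IsProbabilityMeasure μ] (hμ : ∀ᵐ x ∂μ, ‖x‖ ≤ 1)
    {c : ℝ} (hc : 1 ≤ c) :
    rademacher m
      ((fun T : EuclideanSpace ℝ (Fin K) →L[ℝ] H =>
          fun x : H =>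
            sInf (Set.range fun k : Fin K => ‖x - T (EuclideanSpace.single k 1)‖ ^ 2)) ''
        {T | ∀ k, ‖T (EuclideanSpace.single k 1)‖ ≤ c}) μ ≤
      c ^ 2 * K * Real.sqrt (18 * Real.pi / m) := by
  classical
  set S : Set (EuclideanSpace ℝ (Fin K) →L[ℝ] H) :=
    {T | ∀ k, ‖T (EuclideanSpace.single k 1)‖ ≤ c} with hSdef
  haveI hne : Nonempty S := ⟨⟨0, fun k => by
    simp only [Set.mem_setOf_eq, ContinuousLinearMap.zero_apply, norm_zero]; linarith⟩⟩
  have key : ∀ x : Fin m → H, (∀ i, ‖x i‖ ≤ 1) →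
      (∑ ε : Fin m → Bool,
        sSup ((fun f : H → ℝ => ∑ i, (if ε i then (1 : ℝ) else -1) * f (x i)) ''
          ((fun T : EuclideanSpace ℝ (Fin K) →L[ℝ] H =>
            fun z : H =>
              sInf (Set.range fun k : Fin K => ‖z - T (EuclideanSpace.single k 1)‖ ^ 2)) '' S)))
        ≤ 2 ^ m * ((K : ℝ) * ((2 * c + c ^ 2) * Real.sqrt m)) := by
    intro x hx
    have hre : (∑ ε : Fin m → Bool,
        sSup ((fun f : H → ℝ => ∑ i, (if ε i then (1 : ℝ) else -1) * f (x i)) ''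
          ((fun T : EuclideanSpace ℝ (Fin K) →L[ℝ] H =>
            fun z : H =>
              sInf (Set.range fun k : Fin K => ‖z - T (EuclideanSpace.single k 1)‖ ^ 2)) '' S)))
        = RE (T := S) (fun t i => sInf (Set.range fun k : Fin K =>
            ‖x i - (t : EuclideanSpace ℝ (Fin K) →L[ℝ] H) (EuclideanSpace.single k 1)‖ ^ 2)) := by
      unfold RE
      refine Finset.sum_congr rfl fun ε _ => ?_
      rw [Set.image_image, sSup_image']
      rfl
    rw [hre]
    exact master hK hc
      (fun (t : S) k => (t : EuclideanSpace ℝ (Fin K) →L[ℝ] H) (EuclideanSpace.single k 1))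
      (fun t k => t.2 k) x hx
  set B : ℝ := (K : ℝ) * ((2 * c + c ^ 2) * Real.sqrt m) with hBdef
  have hm0 : (0:ℝ) < m := by exact_mod_cast hm
  have hs : (0:ℝ) < Real.sqrt m := Real.sqrt_pos.mpr hm0
  have hK0 : (0:ℝ) ≤ K := Nat.cast_nonneg K
  have hBnonneg : 0 ≤ B := by positivity
  -- a.e. coordinatewise bound
  have hSet : MeasurableSet {z : H | ‖z‖ ≤ 1} :=
    (isClosed_le continuous_norm continuous_const).measurableSet
  have hμS : μ {z : H | ‖z‖ ≤ 1} = 1 := by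
    have h0 : μ {z : H | ¬ ‖z‖ ≤ 1} = 0 := ae_iff.mp hμ
    have h1 := measure_add_measure_compl (μ := μ) hSet
    rw [measure_univ] at h1
    rw [show {z : H | ‖z‖ ≤ 1}ᶜ = {z : H | ¬ ‖z‖ ≤ 1} from rfl, h0, add_zero] at h1
    exact h1
  have haeP : ∀ᵐ x ∂(Measure.pi fun _ : Fin m => μ), ∀ i, ‖x i‖ ≤ 1 := by
    have hπ1 : (Measure.pi fun _ : Fin m => μ)
        (Set.univ.pi fun _ : Fin m => {z : H | ‖z‖ ≤ 1}) = 1 := by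
      rw [Measure.pi_pi]
      simp [hμS]
    have hcompl : (Measure.pi fun _ : Fin m => μ)
        (Set.univ.pi fun _ : Fin m => {z : H | ‖z‖ ≤ 1})ᶜ = 0 := by
      rw [measure_compl (MeasurableSet.univ_pi fun _ => hSet) (by
        rw [hπ1]; exact ENNReal.one_ne_top), hπ1, measure_univ, tsub_self]
    refine ae_iff.mpr ?_
    convert hcompl using 2
    ext x
    simp [Set.mem_pi]
  have hae2 : ∀ᵐ x ∂(Measure.pi fun _ : Fin m => μ),
      (∑ ε : Fin m → Bool,
        sSup ((fun f : H → ℝ => ∑ i, (if ε i then (1 : ℝ) else -1) * f (x i)) ''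
          ((fun T : EuclideanSpace ℝ (Fin K) →L[ℝ] H =>
            fun z : H =>
              sInf (Set.range fun k : Fin K => ‖z - T (EuclideanSpace.single k 1)‖ ^ 2)) '' S)))
          / 2 ^ m ≤ B := by
    refine haeP.mono fun x hx => ?_
    have hk := key x hx
    rw [div_le_iff₀ (by positivity : (0:ℝ) < 2 ^ m)]
    linarith
  unfold rademacher
  by_cases hInt : Integrable (fun x : Fin m → H =>
      (∑ ε : Fin m → Bool,
        sSup ((fun f : H → ℝ => ∑ i, (if ε i then (1 : ℝ) else -1) * f (x i)) ''
          ((fun T : EuclideanSpace ℝ (Fin K) →L[ℝ] H =>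
            fun z : H =>
              sInf (Set.range fun k : Fin K => ‖z - T (EuclideanSpace.single k 1)‖ ^ 2)) '' S)))
          / 2 ^ m) (Measure.pi fun _ : Fin m => μ)
  · have hI := integral_mono_ae hInt (integrable_const B) hae2
    rw [integral_const] at hI
    simp only [measure_univ, ENNReal.toReal_one, probReal_univ, smul_eq_mul, one_mul] at hI
    have h2m : (0:ℝ) ≤ 2 / m := by positivity
    refine le_trans (mul_le_mul_of_nonneg_left hI h2m) ?_
    -- numeric inequality
    have hss : Real.sqrt m * Real.sqrt m = (m:ℝ) := Real.mul_self_sqrt hm0.le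
    rw [Real.sqrt_div (by positivity : (0:ℝ) ≤ 18 * Real.pi)]
    have h6 : (6:ℝ) ≤ Real.sqrt (18 * Real.pi) := by
      rw [show (6:ℝ) = Real.sqrt 36 by
        rw [show (36:ℝ) = 6 ^ 2 by norm_num, Real.sqrt_sq (by norm_num : (0:ℝ) ≤ 6)]]
      exact Real.sqrt_le_sqrt (by nlinarith [Real.pi_gt_three])
    have hkey : 2 * (2 * c + c ^ 2) ≤ c ^ 2 * Real.sqrt (18 * Real.pi) := by
      nlinarith [sq_nonneg c, sq_nonneg (c - 1), mul_le_mul_of_nonneg_left h6 (sq_nonneg c)]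
    have hL : 2 / (m:ℝ) * B = (2 * (2 * c + c ^ 2) * (K:ℝ)) / Real.sqrt m := by
      rw [hBdef, eq_div_iff hs.ne']
      have hx : 2 / (m:ℝ) * ((K:ℝ) * ((2 * c + c ^ 2) * Real.sqrt m)) * Real.sqrt m
          = 2 / (m:ℝ) * ((K:ℝ) * (2 * c + c ^ 2)) * (Real.sqrt m * Real.sqrt m) := by ring
      rw [hx, hss]
      field_simp
    have hR : c ^ 2 * (K:ℝ) * (Real.sqrt (18 * Real.pi) / Real.sqrt m)
        = (c ^ 2 * Real.sqrt (18 * Real.pi) * (K:ℝ)) / Real.sqrt m := by ring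
    rw [hL, hR]
    gcongr
  · rw [integral_undef hInt, mul_zero]
    positivity
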